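/- Let G be a finite cyclic group of order n with generator e, and let G0 ⊆ G be a subset containing e. Then min Δ(B(G0)) = gcd over all minimal zero-sum sequences A over G0 of (σ_e(A) - n)/n, where σ_e(A) = Σ_{h ∈ A} s_e(h) and s_e(h) is the unique integer in [1,n] with h = s_e(h)·e. -/

import Mathlib

open Multiset

section Defs

variable {G : Type*} [AddCommGroup G]

/-- `S` is a zero-sum sequence over `G0`. -/
def IsZeroSumSeq (G0 : Set G) (S : Multiset G) : Prop :=
  (∀ g ∈ S, g ∈ G0) ∧ S.sum = 0

/-- `S` is a minimal zero-sum sequence over `G0`. -/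
def IsMinZeroSum (G0 : Set G) (S : Multiset G) : Prop :=
  S ≠ 0 ∧ IsZeroSumSeq G0 S ∧
    ∀ T : Multiset G, T ≤ S → T ≠ 0 → T ≠ S → T.sum ≠ 0

/-- The set of lengths of factorizations of `B` into minimal zero-sum sequences over `G0`. -/
def LengthSet (G0 : Set G) (B : Multiset G) : Set ℕ :=
  { k | ∃ F : Multiset (Multiset G), F.card = k ∧ (∀ A ∈ F, IsMinZeroSum G0 A) ∧ F.sum = B }

/-- The set of successive distances of a set of naturals. -/
def DeltaOf (L : Set ℕ) : Set ℕ :=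
  { d | ∃ a ∈ L, ∃ b ∈ L, a < b ∧ b - a = d ∧ ∀ c ∈ L, ¬(a < c ∧ c < b) }

/-- The set of distances of the monoid of zero-sum sequences over `G0`. -/
def DeltaB (G0 : Set G) : Set ℕ :=
  ⋃ B ∈ { B : Multiset G | IsZeroSumSeq G0 B }, DeltaOf (LengthSet G0 B)

/-- Minimal distance, with the convention `min ∅ = 0`. -/
noncomputable def minDelta (G0 : Set G) : ℕ := sInf (DeltaB G0)

/-- Cross number of a sequence. -/
noncomputable def crossNum (S : Multiset G) : ℚ :=
  (S.map fun g => (1 : ℚ) / (addOrderOf g : ℚ)).sum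

/-- `G0` is weakly half-factorial. -/
def WeaklyHF (G0 : Set G) : Prop :=
  ∀ A : Multiset G, IsMinZeroSum G0 A → ∃ m : ℕ, crossNum A = (m : ℚ)

/-- `G0` is half-factorial. -/
def HalfFactorial (G0 : Set G) : Prop :=
  ∀ B : Multiset G, IsZeroSumSeq G0 B →
    ∀ k ∈ LengthSet G0 B, ∀ l ∈ LengthSet G0 B, k = l

end Defs


lemma aux_gap {L : Set ℕ} {a b : ℕ} (ha : a ∈ L) (hb : b ∈ L) (hab : a < b) :
    ∃ c ∈ L, a < c ∧ c ≤ b ∧ (c - a) ∈ DeltaOf L := by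
  have hne : (({x | x ∈ L ∧ a < x}) : Set ℕ).Nonempty := ⟨b, hb, hab⟩
  have hmem := Nat.sInf_mem hne
  set c := sInf {x | x ∈ L ∧ a < x} with hc
  refine ⟨c, hmem.1, hmem.2, Nat.sInf_le (show b ∈ {x | x ∈ L ∧ a < x} from ⟨hb, hab⟩), ?_⟩
  simp only [DeltaOf, Set.mem_setOf_eq]
  exact ⟨a, ha, c, hmem.1, ⟨hmem.2, rfl, fun x hx h =>
    absurd (Nat.sInf_le (show x ∈ {x | x ∈ L ∧ a < x} from ⟨hx, h.1⟩)) (not_le.2 h.2)⟩⟩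

lemma aux_chain {L : Set ℕ} {d : ℕ} (hd : ∀ g ∈ DeltaOf L, d ∣ g) :
    ∀ k a b, a ∈ L → b ∈ L → a ≤ b → b - a ≤ k → d ∣ b - a := by
  intro k
  induction k with
  | zero => intro a b _ _ _ h; simpa [Nat.le_zero.1 h] using dvd_zero d
  | succ k ih =>
    intro a b ha hb hab h
    rcases eq_or_lt_of_le hab with rfl | hlt
    · simp
    · obtain ⟨c, hcL, hac, hcb, hgap⟩ := aux_gap ha hb hlt
      have h1 : d ∣ c - a := hd _ hgap
      have h2 : d ∣ b - c := ih c b hcL hb hcb (by omega)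
      have : b - a = (b - c) + (c - a) := by omega
      rw [this]; exact dvd_add h2 h1

lemma aux_zs_add {G : Type*} [AddCommGroup G] {G0 : Set G} {B1 B2 : Multiset G}
    (h1 : IsZeroSumSeq G0 B1) (h2 : IsZeroSumSeq G0 B2) : IsZeroSumSeq G0 (B1 + B2) := by
  refine ⟨fun g hg => ?_, by simp [h1.2, h2.2]⟩
  rcases Multiset.mem_add.1 hg with h | h
  exacts [h1.1 g h, h2.1 g h]

lemma aux_zs_nsmul {G : Type*} [AddCommGroup G] {G0 : Set G} {B : Multiset G}
    (h : IsZeroSumSeq G0 B) (q : ℕ) : IsZeroSumSeq G0 (q • B) := by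
  induction q with
  | zero => exact ⟨by simp, by simp⟩
  | succ q ih => rw [succ_nsmul]; exact aux_zs_add ih h

lemma aux_len_add {G : Type*} [AddCommGroup G] {G0 : Set G} {B1 B2 : Multiset G} {k1 k2 : ℕ}
    (h1 : k1 ∈ LengthSet G0 B1) (h2 : k2 ∈ LengthSet G0 B2) :
    k1 + k2 ∈ LengthSet G0 (B1 + B2) := by
  obtain ⟨F1, hc1, hm1, hs1⟩ := h1
  obtain ⟨F2, hc2, hm2, hs2⟩ := h2
  refine ⟨F1 + F2, by simp [hc1, hc2], fun A hA => ?_, by simp [hs1, hs2]⟩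
  rcases Multiset.mem_add.1 hA with h | h
  exacts [hm1 A h, hm2 A h]

lemma aux_len_nsmul {G : Type*} [AddCommGroup G] {G0 : Set G} {B : Multiset G} {k : ℕ}
    (h : k ∈ LengthSet G0 B) (q : ℕ) : q * k ∈ LengthSet G0 (q • B) := by
  induction q with
  | zero => exact ⟨0, by simp, by simp, by simp⟩
  | succ q ih =>
    rw [succ_nsmul, Nat.succ_mul]
    exact aux_len_add ih h

lemma aux_mem_DeltaB {G : Type*} [AddCommGroup G] {G0 : Set G} {B : Multiset G} {g : ℕ}
    (hB : IsZeroSumSeq G0 B) (hg : g ∈ DeltaOf (LengthSet G0 B)) : g ∈ DeltaB G0 := by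
  simp only [DeltaB, Set.mem_iUnion, Set.mem_setOf_eq]
  exact ⟨B, hB, hg⟩

lemma aux_minDelta_dvd {G : Type*} [AddCommGroup G] {G0 : Set G} :
    ∀ g ∈ DeltaB G0, minDelta G0 ∣ g := by
  intro g hg
  have hne : (DeltaB G0).Nonempty := ⟨g, hg⟩
  have hdmem : minDelta G0 ∈ DeltaB G0 := Nat.sInf_mem hne
  set d := minDelta G0 with hd
  simp only [DeltaB, Set.mem_iUnion, Set.mem_setOf_eq] at hdmem hg
  obtain ⟨B1, hB1, a1, ha1, b1, hb1, hab1, hd1, -⟩ := hdmem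
  obtain ⟨B2, hB2, a2, ha2, b2, hb2, hab2, hg2, -⟩ := hg
  have hdpos : 0 < d := by omega
  set q := g / d with hq
  set r := g % d with hr
  have hrd : r < d := Nat.mod_lt _ hdpos
  have hgdr : g = d * q + r := by rw [hq, hr]; exact (Nat.div_add_mod g d).symm
  have hx1 : q * b1 + a2 ∈ LengthSet G0 (q • B1 + B2) := aux_len_add (aux_len_nsmul hb1 q) ha2
  have hx2 : q * a1 + b2 ∈ LengthSet G0 (q • B1 + B2) := aux_len_add (aux_len_nsmul ha1 q) hb2
  have hkey : q * a1 + b2 = q * b1 + a2 + r := by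
    have : b1 = a1 + d := by omega
    have hb2' : b2 = a2 + g := by omega
    rw [this, hb2', hgdr]; ring
  rcases Nat.eq_zero_or_pos r with hr0 | hrpos
  · exact ⟨q, by omega⟩
  · exfalso
    rw [hkey] at hx2
    have hBzs : IsZeroSumSeq G0 (q • B1 + B2) := aux_zs_add (aux_zs_nsmul hB1 q) hB2
    obtain ⟨c, hcL, hac, hcb, hgap⟩ := aux_gap hx1 hx2 (by omega)
    have hmem : c - (q * b1 + a2) ∈ DeltaB G0 := aux_mem_DeltaB hBzs hgap
    have hdle : d ≤ c - (q * b1 + a2) := Nat.sInf_le hmem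
    omega

section Sigma
variable {G : Type*} [AddCommGroup G] {n : ℕ} {e : G} {G0 : Set G} {s : G → ℕ}

lemma aux_sum_eq (hs : ∀ h ∈ G0, s h ∈ Finset.Icc 1 n ∧ s h • e = h) :
    ∀ S : Multiset G, (∀ g ∈ S, g ∈ G0) → S.sum = ((S.map s).sum) • e := by
  intro S
  induction S using Multiset.induction with
  | empty => simp
  | cons h S ih =>
    intro hmem
    have h1 : h ∈ G0 := hmem h (Multiset.mem_cons_self h S)
    have h2 := ih (fun g hg => hmem g (Multiset.mem_cons_of_mem hg))
    simp only [Multiset.sum_cons, Multiset.map_cons]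
    rw [h2, add_nsmul, (hs h h1).2]

lemma aux_n_dvd_sigma (he : addOrderOf e = n)
    (hs : ∀ h ∈ G0, s h ∈ Finset.Icc 1 n ∧ s h • e = h)
    {S : Multiset G} (hS : IsZeroSumSeq G0 S) : n ∣ (S.map s).sum := by
  have := aux_sum_eq hs S hS.1
  rw [hS.2] at this
  rw [← he]
  exact addOrderOf_dvd_of_nsmul_eq_zero this.symm

lemma aux_sigma_pos (hs : ∀ h ∈ G0, s h ∈ Finset.Icc 1 n ∧ s h • e = h)
    {S : Multiset G} (hS0 : S ≠ 0) (hmem : ∀ g ∈ S, g ∈ G0) : 1 ≤ (S.map s).sum := by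
  obtain ⟨g, hg⟩ := Multiset.exists_mem_of_ne_zero hS0
  have h1 : 1 ≤ s g := (Finset.mem_Icc.1 (hs g (hmem g hg)).1).1
  have h2 : s g ≤ (S.map s).sum :=
    Multiset.single_le_sum (fun x _ => Nat.zero_le x) _ (Multiset.mem_map_of_mem s hg)
  omega

lemma aux_min_of_sigma (hn : 0 < n) (he : addOrderOf e = n)
    (hs : ∀ h ∈ G0, s h ∈ Finset.Icc 1 n ∧ s h • e = h)
    {S : Multiset G} (hS0 : S ≠ 0) (hmem : ∀ g ∈ S, g ∈ G0) (hsum : S.sum = 0)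
    (hsig : (S.map s).sum = n) : IsMinZeroSum G0 S := by
  refine ⟨hS0, ⟨hmem, hsum⟩, ?_⟩
  intro T hTS hT0 hTS' hTsum
  have hTmem : ∀ g ∈ T, g ∈ G0 := fun g hg => hmem g (Multiset.mem_of_le hTS hg)
  obtain ⟨U, hU⟩ := Multiset.le_iff_exists_add.1 hTS
  have hU0 : U ≠ 0 := by
    intro h
    rw [h, add_zero] at hU
    exact hTS' hU.symm
  have hUmem : ∀ g ∈ U, g ∈ G0 := fun g hg =>
    hmem g (by rw [hU]; exact Multiset.mem_add.2 (Or.inr hg))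
  have hUsum : U.sum = 0 := by
    have : T.sum + U.sum = S.sum := by rw [hU, Multiset.sum_add]
    rw [hsum, hTsum] at this
    simpa using this
  have hsplit : (T.map s).sum + (U.map s).sum = n := by
    rw [← Multiset.sum_add, ← Multiset.map_add, ← hU, hsig]
  have hd1 : n ∣ (T.map s).sum := aux_n_dvd_sigma he hs ⟨hTmem, hTsum⟩
  have hd2 : n ∣ (U.map s).sum := aux_n_dvd_sigma he hs ⟨hUmem, hUsum⟩
  have hp1 : 1 ≤ (T.map s).sum := aux_sigma_pos hs hT0 hTmem
  have hp2 : 1 ≤ (U.map s).sum := aux_sigma_pos hs hU0 hUmem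
  have hl1 : n ≤ (T.map s).sum := Nat.le_of_dvd (by omega) hd1
  have hl2 : n ≤ (U.map s).sum := Nat.le_of_dvd (by omega) hd2
  omega

lemma aux_se (hn : 0 < n) (he : addOrderOf e = n) (heG : e ∈ G0)
    (hs : ∀ h ∈ G0, s h ∈ Finset.Icc 1 n ∧ s h • e = h) : s e = 1 := by
  obtain ⟨hIcc, hse⟩ := hs e heG
  rw [Finset.mem_Icc] at hIcc
  have h1 : (s e - 1) • e = 0 := by
    have : s e = (s e - 1) + 1 := by omega
    rw [this, add_nsmul, one_nsmul] at hse
    exact add_eq_right.1 hse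
  have h2 : n ∣ s e - 1 := he ▸ addOrderOf_dvd_of_nsmul_eq_zero h1
  rcases Nat.eq_zero_or_pos (s e - 1) with h3 | h3
  · omega
  · have := Nat.le_of_dvd h3 h2
    omega

lemma aux_atom_en (hn : 0 < n) (he : addOrderOf e = n) (heG : e ∈ G0)
    (hs : ∀ h ∈ G0, s h ∈ Finset.Icc 1 n ∧ s h • e = h) :
    IsMinZeroSum G0 (Multiset.replicate n e) := by
  have hse := aux_se hn he heG hs
  refine aux_min_of_sigma hn he hs ?_ ?_ ?_ ?_
  · intro h
    have := congrArg Multiset.card h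
    simp at this
    omega
  · intro g hg; rw [Multiset.eq_of_mem_replicate hg]; exact heG
  · rw [Multiset.sum_replicate, ← he]; exact addOrderOf_nsmul_eq_zero e
  · rw [Multiset.map_replicate, Multiset.sum_replicate, hse, smul_eq_mul, mul_one]

lemma aux_atom_h (hn : 0 < n) (he : addOrderOf e = n) (heG : e ∈ G0)
    (hs : ∀ h ∈ G0, s h ∈ Finset.Icc 1 n ∧ s h • e = h)
    {h : G} (hh : h ∈ G0) :
    IsMinZeroSum G0 (h ::ₘ Multiset.replicate (n - s h) e) := by
  have hse := aux_se hn he heG hs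
  have hIcc := Finset.mem_Icc.1 (hs h hh).1
  have hmem : ∀ g ∈ h ::ₘ Multiset.replicate (n - s h) e, g ∈ G0 := by
    intro g hg
    rcases Multiset.mem_cons.1 hg with rfl | hg
    · exact hh
    · rw [Multiset.eq_of_mem_replicate hg]; exact heG
  have hsig : ((h ::ₘ Multiset.replicate (n - s h) e).map s).sum = n := by
    rw [Multiset.map_cons, Multiset.sum_cons, Multiset.map_replicate, Multiset.sum_replicate,
      hse, smul_eq_mul, mul_one]
    omega
  refine aux_min_of_sigma hn he hs (Multiset.cons_ne_zero) hmem ?_ hsig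
  rw [aux_sum_eq hs _ hmem, hsig, ← he]
  exact addOrderOf_nsmul_eq_zero e

end Sigma

section Main
variable {G : Type*} [AddCommGroup G] {n : ℕ} {e : G} {G0 : Set G} {s : G → ℕ}

lemma aux_map_cons_sum (e : G) (s : G → ℕ) (n : ℕ) :
    ∀ A : Multiset G, ((A.map (fun h => h ::ₘ Multiset.replicate (n - s h) e)).sum
      = A + Multiset.replicate ((A.map (fun h => n - s h)).sum) e) := by
  intro A
  induction A using Multiset.induction with
  | empty => simp
  | cons h A ih =>
    simp only [Multiset.map_cons, Multiset.sum_cons, ih, Multiset.replicate_add]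
    rw [← Multiset.singleton_add, ← Multiset.singleton_add]
    abel

lemma aux_sub_sum (hs : ∀ h ∈ G0, s h ∈ Finset.Icc 1 n ∧ s h • e = h) :
    ∀ A : Multiset G, (∀ g ∈ A, g ∈ G0) →
      (A.map (fun h => n - s h)).sum + (A.map s).sum = n * A.card := by
  intro A
  induction A using Multiset.induction with
  | empty => simp
  | cons h A ih =>
    intro hmem
    have h1 := Finset.mem_Icc.1 (hs h (hmem h (Multiset.mem_cons_self h A))).1
    have h2 := ih (fun g hg => hmem g (Multiset.mem_cons_of_mem hg))
    simp only [Multiset.map_cons, Multiset.sum_cons, Multiset.card_cons, Nat.mul_succ]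
    omega

/-- For a minimal zero-sum sequence, σ(A) = n * (σ(A)/n) with σ(A)/n ≥ 1. -/
lemma aux_sigma_atom (hn : 0 < n) (he : addOrderOf e = n)
    (hs : ∀ h ∈ G0, s h ∈ Finset.Icc 1 n ∧ s h • e = h)
    {A : Multiset G} (hA : IsMinZeroSum G0 A) :
    (A.map s).sum = n * ((A.map s).sum / n - 1) + n := by
  have hd := aux_n_dvd_sigma he hs hA.2.1
  have hp := aux_sigma_pos hs hA.1 hA.2.1.1
  obtain ⟨k, hk⟩ := hd
  have hk1 : 1 ≤ k := by
    rcases Nat.eq_zero_or_pos k with rfl | h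
    · omega
    · exact h
  have hk2 : k = (k - 1) + 1 := by omega
  rw [hk, Nat.mul_div_cancel_left _ hn]
  conv_lhs => rw [hk2]
  ring

lemma aux_fact_sigma (hn : 0 < n) (he : addOrderOf e = n)
    (hs : ∀ h ∈ G0, s h ∈ Finset.Icc 1 n ∧ s h • e = h)
    (m : ℕ) (hm : ∀ A : Multiset G, IsMinZeroSum G0 A → m ∣ (A.map s).sum / n - 1) :
    ∀ F : Multiset (Multiset G), (∀ A ∈ F, IsMinZeroSum G0 A) →
      ∃ u : ℕ, ((F.sum).map s).sum = n * F.card + n * (m * u) := by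
  intro F
  induction F using Multiset.induction with
  | empty => exact fun _ => ⟨0, by simp⟩
  | cons A F ih =>
    intro hmem
    have hA := hmem A (Multiset.mem_cons_self A F)
    obtain ⟨u, hu⟩ := ih (fun B hB => hmem B (Multiset.mem_cons_of_mem hB))
    obtain ⟨v, hv⟩ := hm A hA
    have hsig := aux_sigma_atom hn he hs hA
    refine ⟨u + v, ?_⟩
    rw [Multiset.sum_cons, Multiset.map_add, Multiset.sum_add, hu, Multiset.card_cons]
    rw [hv] at hsig
    rw [hsig]
    ring

end Main


/-- For `G0` containing a generator `e`, `min Δ(B(G0))` equals the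
gcd over all minimal zero-sum sequences `A` over `G0` of `σ_e(A)/n - 1`, where
`σ_e` sums the representatives `s_e(h) ∈ [1,n]` with `h = s_e(h)•e`.
The gcd is expressed via its universal property in the divisibility order. -/
theorem stmt_2 {G : Type*} [AddCommGroup G] [Fintype G] (n : ℕ)
    (hcard : Fintype.card G = n) (e : G) (he : addOrderOf e = n)
    (G0 : Set G) (heG : e ∈ G0)
    (s : G → ℕ) (hs : ∀ h ∈ G0, s h ∈ Finset.Icc 1 n ∧ s h • e = h) :
    (∀ A : Multiset G, IsMinZeroSum G0 A → minDelta G0 ∣ (A.map s).sum / n - 1) ∧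
    ∀ m : ℕ, (∀ A : Multiset G, IsMinZeroSum G0 A → m ∣ (A.map s).sum / n - 1) →
      m ∣ minDelta G0 := by
  have hn : 0 < n := hcard ▸ Fintype.card_pos
  constructor
  · -- minDelta divides each σ(A)/n - 1
    intro A hA
    set t := (A.map s).sum / n - 1 with ht
    have hsig : (A.map s).sum = n * t + n := aux_sigma_atom hn he hs hA
    set r := (A.map (fun h => n - s h)).sum with hr
    have hrs : r + (A.map s).sum = n * A.card := aux_sub_sum hs A hA.2.1.1
    -- n divides r
    have hnr : ∃ w, r = n * w := by
      have hle : t + 1 ≤ A.card := by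
        by_contra hc
        push_neg at hc
        have h2 : A.card ≤ t := by omega
        have h3 := Nat.mul_le_mul_left n h2
        omega
      refine ⟨A.card - (t + 1), ?_⟩
      have h3 : A.card = (A.card - (t + 1)) + (t + 1) := by omega
      have h4 : n * A.card = n * (A.card - (t + 1)) + (n * t + n) := by
        conv_lhs => rw [h3]
        ring
      omega
    obtain ⟨w, hw⟩ := hnr
    set B := A + Multiset.replicate r e with hB
    have hBzs : IsZeroSumSeq G0 B := by
      constructor
      · intro g hg
        rcases Multiset.mem_add.1 hg with hg | hg
        · exact hA.2.1.1 g hg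
        · rw [Multiset.eq_of_mem_replicate hg]; exact heG
      · have hne0 : n • e = 0 := by rw [← he]; exact addOrderOf_nsmul_eq_zero e
        have hmul : (n * w) • e = w • (n • e) := by
          rw [Nat.mul_comm n w]
          exact mul_nsmul' e w n
        rw [Multiset.sum_add, hA.2.1.2, zero_add, Multiset.sum_replicate, hw, hmul, hne0,
          smul_zero]
    -- length A.card
    have hlen1 : A.card ∈ LengthSet G0 B := by
      refine ⟨A.map (fun h => h ::ₘ Multiset.replicate (n - s h) e), by simp, ?_, ?_⟩
      · intro X hX
        obtain ⟨h, hh, rfl⟩ := Multiset.mem_map.1 hX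
        exact aux_atom_h hn he heG hs (hA.2.1.1 h hh)
      · rw [aux_map_cons_sum, ← hr, ← hB]
    -- length 1 + w
    have hlen2 : 1 + w ∈ LengthSet G0 B := by
      refine ⟨A ::ₘ Multiset.replicate w (Multiset.replicate n e), by simp [Nat.add_comm], ?_, ?_⟩
      · intro X hX
        rcases Multiset.mem_cons.1 hX with rfl | hX
        · exact hA
        · rw [Multiset.eq_of_mem_replicate hX]
          exact aux_atom_en hn he heG hs
      · rw [Multiset.sum_cons, Multiset.sum_replicate, Multiset.nsmul_replicate, hB, hw,
          Nat.mul_comm w n]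
    -- n * (1 + w + t) = n * card
    have hcardeq : 1 + w + t = A.card := by
      have h1 : n * (1 + w + t) = n * A.card := by
        have : n * (1 + w + t) = n + n * w + n * t := by ring
        rw [this, ← hw]
        omega
      exact Nat.eq_of_mul_eq_mul_left hn h1
    have hdvd : minDelta G0 ∣ A.card - (1 + w) := by
      refine aux_chain (fun g hg => aux_minDelta_dvd g (aux_mem_DeltaB hBzs hg))
        (A.card) (1 + w) A.card hlen2 hlen1 (by omega) (by omega)
    have : A.card - (1 + w) = t := by omega
    rwa [this] at hdvd
  · -- any common divisor m divides minDelta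
    intro m hm
    by_cases hne : (DeltaB G0).Nonempty
    · have hdmem : minDelta G0 ∈ DeltaB G0 := Nat.sInf_mem hne
      simp only [DeltaB, Set.mem_iUnion, Set.mem_setOf_eq] at hdmem
      obtain ⟨B, hBzs, a, ha, b, hb, hab, hd, -⟩ := hdmem
      obtain ⟨F1, hc1, hm1, hs1⟩ := ha
      obtain ⟨F2, hc2, hm2, hs2⟩ := hb
      obtain ⟨u1, hu1⟩ := aux_fact_sigma hn he hs m hm F1 hm1
      obtain ⟨u2, hu2⟩ := aux_fact_sigma hn he hs m hm F2 hm2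
      rw [hs1, hc1] at hu1
      rw [hs2, hc2] at hu2
      -- n * a + n * m * u1 = n * b + n * m * u2
      have key : n * a + n * (m * u1) = n * b + n * (m * u2) := by rw [← hu1, ← hu2]
      have hmu : m * u1 = minDelta G0 + m * u2 := by
        have h2 : n * (m * u1) = n * (minDelta G0 + m * u2) := by
          have : n * (minDelta G0 + m * u2) = n * minDelta G0 + n * (m * u2) := by ring
          rw [this]
          have hb' : b = a + minDelta G0 := by omega
          rw [hb'] at key
          have : n * (a + minDelta G0) = n * a + n * minDelta G0 := by ring
          rw [this] at key
          omega
        exact Nat.eq_of_mul_eq_mul_left hn h2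
      rcases Nat.eq_zero_or_pos m with rfl | hmpos
      · simp at hmu
        omega
      · have hle : u2 ≤ u1 := by
          by_contra hc
          push_neg at hc
          have : m * u1 < m * u2 := (Nat.mul_lt_mul_left hmpos).2 hc
          omega
        refine ⟨u1 - u2, ?_⟩
        have h6 : u1 = (u1 - u2) + u2 := by omega
        have h7 : m * u1 = m * (u1 - u2) + m * u2 := by
          conv_lhs => rw [h6]
          ring
        omega
    · rw [Set.not_nonempty_iff_eq_empty] at hne
      have : minDelta G0 = 0 := by rw [minDelta, hne, Nat.sInf_empty]
      simp [this]
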